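/- Let f : ℝ^m → ℝ be a convex differentiable function, let A ⊆ {1,…,m}, let λ > 0, and let η̂ be a global minimizer of η ↦ f(η) + λ·Σ_{j∈A}|η_j|. Then for every η* ∈ ℝ^m, writing Δ = η̂ − η* and S = {j : η*_j ≠ 0}, the first-order difference D := Δ·(∇f(η̂) − ∇f(η*)) satisfies D ≤ λ‖Δ_{A∩S}‖₁ − λ‖Δ_{A∖S}‖₁ + ‖Δ‖₁·‖∇f(η*)‖_∞. -/

import Mathlib

open Classical in
lemma sum_mul_single_eq {m : ℕ} (L : (Fin m → ℝ) →L[ℝ] ℝ) (v : Fin m → ℝ) :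
    ∑ j, v j * L (Pi.single j 1) = L v := by
  have h : (∑ j, v j • (Pi.single j 1 : Fin m → ℝ)) = v := by
    ext i
    simp [Pi.single_apply]
  calc ∑ j, v j * L (Pi.single j 1)
      = ∑ j, L (v j • (Pi.single j 1 : Fin m → ℝ)) := by simp [smul_eq_mul]
    _ = L (∑ j, v j • (Pi.single j 1 : Fin m → ℝ)) := (map_sum L _ _).symm
    _ = L v := by rw [h]

lemma dir_deriv_ge {m : ℕ} (f : (Fin m → ℝ) → ℝ) (hdiff : Differentiable ℝ f)
    (x d : Fin m → ℝ) (c : ℝ)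
    (h : ∀ t : ℝ, t ∈ Set.Ioo (0:ℝ) 1 → t * c ≤ f (x + t • d) - f x) :
    c ≤ fderiv ℝ f x d := by
  have hline : HasDerivAt (fun t : ℝ => x + t • d) d 0 := by
    simpa using ((hasDerivAt_id (0:ℝ)).smul_const d).const_add x
  have hφ : HasDerivAt (fun t : ℝ => f (x + t • d)) (fderiv ℝ f x d) 0 := by
    have := (hdiff (x + (0:ℝ) • d)).hasFDerivAt.comp_hasDerivAt 0 hline
    rw [zero_smul, add_zero] at this
    exact this
  have htend := hasDerivAt_iff_tendsto_slope.mp hφ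
  have htend' : Filter.Tendsto (slope (fun t : ℝ => f (x + t • d)) 0)
      (nhdsWithin 0 (Set.Ioi 0)) (nhds (fderiv ℝ f x d)) :=
    htend.mono_left (nhdsWithin_mono 0 (fun t ht => ne_of_gt ht))
  refine ge_of_tendsto htend' ?_
  filter_upwards [Ioo_mem_nhdsGT_of_mem (Set.left_mem_Ico.2 one_pos)] with t ht
  have ht0 : (0:ℝ) < t := ht.1
  have hs : slope (fun t : ℝ => f (x + t • d)) 0 t
      = (f (x + t • d) - f x) / t := by
    rw [slope_def_field]
    simp
  rw [hs, le_div_iff₀ ht0]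
  have := h t ht
  nlinarith


open Classical in
/-- Basic inequality for the partially ℓ₁-penalized estimator: if
`η̂` globally minimizes `η ↦ f(η) + λ·Σ_{j∈A}|η_j|`, then for every `η*`, with
`Δ = η̂ − η*` and `S = supp(η*)`, the first-order difference
`D = Δ·(∇f(η̂) − ∇f(η*))` satisfies
`D ≤ λ‖Δ_{A∩S}‖₁ − λ‖Δ_{A∖S}‖₁ + ‖Δ‖₁·‖∇f(η*)‖_∞`. -/
theorem penalized_basic_inequality
    {m : ℕ} (f : (Fin m → ℝ) → ℝ)
    (hconv : ConvexOn ℝ Set.univ f) (hdiff : Differentiable ℝ f)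
    (A : Finset (Fin m)) (lam : ℝ) (hlam : 0 < lam) (etahat : Fin m → ℝ)
    (hmin : ∀ η : Fin m → ℝ,
      f etahat + lam * ∑ j ∈ A, |etahat j| ≤ f η + lam * ∑ j ∈ A, |η j|)
    (etastar : Fin m → ℝ) :
    ∑ j, (etahat j - etastar j) *
        (fderiv ℝ f etahat (Pi.single j 1) - fderiv ℝ f etastar (Pi.single j 1))
      ≤ lam * (∑ j ∈ A.filter (fun j => etastar j ≠ 0), |etahat j - etastar j|)
        - lam * (∑ j ∈ A.filter (fun j => etastar j = 0), |etahat j - etastar j|)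
        + (∑ j, |etahat j - etastar j|)
          * (⨆ j : Fin m, |fderiv ℝ f etastar (Pi.single j 1)|) := by
  set Δ : Fin m → ℝ := fun j => etahat j - etastar j with hΔdef
  set L1 := fderiv ℝ f etahat with hL1def
  set L2 := fderiv ℝ f etastar with hL2def
  have hLHS : ∑ j, Δ j * (L1 (Pi.single j 1) - L2 (Pi.single j 1))
      = L1 Δ - L2 Δ := by
    rw [← sum_mul_single_eq L1 Δ, ← sum_mul_single_eq L2 Δ, ← Finset.sum_sub_distrib]
    congr 1; ext j; ring
  -- Step A: L1 Δ ≤ lam * (Pstar - Phat)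
  set Phat := ∑ j ∈ A, |etahat j| with hPhat
  set Pstar := ∑ j ∈ A, |etastar j| with hPstar
  set d : Fin m → ℝ := fun j => etastar j - etahat j with hddef
  have hkey : lam * (Phat - Pstar) ≤ L1 d := by
    apply dir_deriv_ge f hdiff etahat d
    intro t ht
    have ht0 : (0:ℝ) < t := ht.1
    have ht1 : t < 1 := ht.2
    have h1 := hmin (etahat + t • d)
    have h2 : ∑ j ∈ A, |(etahat + t • d) j| ≤ (1 - t) * Phat + t * Pstar := by
      rw [hPhat, hPstar, Finset.mul_sum, Finset.mul_sum, ← Finset.sum_add_distrib]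
      apply Finset.sum_le_sum
      intro j _
      have : (etahat + t • d) j = (1 - t) * etahat j + t * etastar j := by
        simp [hddef]; ring
      rw [this]
      calc |(1 - t) * etahat j + t * etastar j|
          ≤ |(1 - t) * etahat j| + |t * etastar j| := abs_add_le _ _
        _ = (1 - t) * |etahat j| + t * |etastar j| := by
            rw [abs_mul, abs_mul, abs_of_nonneg (by linarith : (0:ℝ) ≤ 1 - t),
              abs_of_nonneg ht0.le]
    nlinarith
  have hA : L1 Δ ≤ lam * (Pstar - Phat) := by
    have hΔd : Δ = -d := by ext j; simp [hΔdef, hddef]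
    rw [hΔd, map_neg]
    linarith
  -- Step B
  have hB : Pstar - Phat ≤ (∑ j ∈ A.filter (fun j => etastar j ≠ 0), |Δ j|)
      - (∑ j ∈ A.filter (fun j => etastar j = 0), |Δ j|) := by
    have hsplit : Pstar - Phat = ∑ j ∈ A, (|etastar j| - |etahat j|) := by
      rw [hPstar, hPhat, Finset.sum_sub_distrib]
    rw [hsplit, ← Finset.sum_filter_add_sum_filter_not A (fun j => etastar j ≠ 0)]
    have e1 : ∑ j ∈ A.filter (fun j => etastar j ≠ 0), (|etastar j| - |etahat j|)
        ≤ ∑ j ∈ A.filter (fun j => etastar j ≠ 0), |Δ j| := by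
      apply Finset.sum_le_sum
      intro j _
      have := abs_sub_abs_le_abs_sub (etastar j) (etahat j)
      have h' : |etastar j - etahat j| = |Δ j| := by rw [hΔdef]; exact abs_sub_comm _ _
      linarith
    have e2 : ∑ j ∈ A.filter (fun j => ¬ etastar j ≠ 0), (|etastar j| - |etahat j|)
        = - ∑ j ∈ A.filter (fun j => etastar j = 0), |Δ j| := by
      rw [← Finset.sum_neg_distrib]
      apply Finset.sum_congr (by simp)
      intro j hj
      have hj0 : etastar j = 0 := by simpa using (Finset.mem_filter.mp hj).2
      simp [hΔdef, hj0]
    rw [e2] at *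
    linarith
  -- Step C
  set C := ⨆ j : Fin m, |L2 (Pi.single j 1)| with hC
  have hCb : ∀ j : Fin m, |L2 (Pi.single j 1)| ≤ C :=
    fun j => le_ciSup (f := fun j : Fin m => |L2 (Pi.single j 1)|)
      (Set.Finite.bddAbove (Set.finite_range _)) j
  have hC2 : - L2 Δ ≤ (∑ j, |Δ j|) * C := by
    have h1 : - L2 Δ ≤ |L2 Δ| := neg_le_abs _
    have h2 : |L2 Δ| ≤ ∑ j, |Δ j * L2 (Pi.single j 1)| := by
      rw [← sum_mul_single_eq L2 Δ]
      exact Finset.abs_sum_le_sum_abs _ _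
    have h3 : ∑ j, |Δ j * L2 (Pi.single j 1)| ≤ ∑ j, |Δ j| * C := by
      apply Finset.sum_le_sum
      intro j _
      rw [abs_mul]
      exact mul_le_mul_of_nonneg_left (hCb j) (abs_nonneg _)
    rw [← Finset.sum_mul] at h3
    linarith
  rw [hLHS]
  have := mul_le_mul_of_nonneg_left hB hlam.le
  linarith
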